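/- arXiv:1012.4777 — 4 statements merged into one kernel-verified Lean document; each statement's English description precedes it below -/
import Mathlib

section
/- Let (V, E, g, n) be a stable graph of type (G, N) with K = |V| vertices, and let p be the number of vertices v with g_v = 0. Then 2p ≤ 2(G - \sum_v g_v) + K - 2 + N. (Intuition: the stability condition at each genus-0 vertex requires at least 3 half-edges, one of which can come from the K-1 edges needed to connect the graph; the remaining half-edges are bounded by the total number of available half-edges plus marked points.) -/
open Finset

/-- Number of edges of a multigraph on `Fin K` with multiplicity matrix `a`
(loops counted once). -/
def edgeCount {K : ℕ} (a : Fin K → Fin K → ℕ) : ℕ :=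
  (∑ v, a v v) + ∑ i, ∑ j, if i < j then a i j else 0

/-- Degree of a vertex: loops count twice. -/
def degree {K : ℕ} (a : Fin K → Fin K → ℕ) (v : Fin K) : ℕ :=
  2 * a v v + ∑ w ∈ Finset.univ.filter (fun w => w ≠ v), a v w

/-- A stable graph of type `(G, N)` on `K` vertices: a connected colored
multigraph with genus condition, marked-point condition, and stability. -/
structure StableGraph (G N K : ℕ) where
  a : Fin K → Fin K → ℕ
  g : Fin K → ℕ
  n : Fin K → ℕ
  symm : ∀ i j, a i j = a j i
  conn : (SimpleGraph.fromRel (fun i j : Fin K => 0 < a i j)).Connected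
  genus : (∑ v, g v) + edgeCount a = G + (K - 1)
  marks : (∑ v, n v) = N
  stable : ∀ v, g v = 0 → 3 ≤ degree a v + n v

lemma handshake {K : ℕ} (a : Fin K → Fin K → ℕ) (hs : ∀ i j, a i j = a j i) :
    ∑ v, degree a v = 2 * edgeCount a := by
  unfold degree edgeCount
  rw [Finset.sum_add_distrib]
  have h1 : ∀ v : Fin K, ∑ w ∈ Finset.univ.filter (fun w => w ≠ v), a v w
      = (∑ w, if v < w then a v w else 0) + ∑ w, if w < v then a v w else 0 := by
    intro v
    rw [Finset.sum_filter, ← Finset.sum_add_distrib]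
    apply Finset.sum_congr rfl
    intro w _
    rcases lt_trichotomy v w with h | h | h
    · simp [h, h.ne', not_lt.mpr h.le]
    · subst h; simp
    · simp [h, h.ne, not_lt.mpr h.le]
  have h2 : ∑ v : Fin K, ∑ w, (if w < v then a v w else 0)
      = ∑ v : Fin K, ∑ w, (if v < w then a v w else 0) := by
    rw [Finset.sum_comm]
    apply Finset.sum_congr rfl; intro i _
    apply Finset.sum_congr rfl; intro j _
    simp only [hs i j]
  simp only [h1]
  rw [Finset.sum_add_distrib, h2, ← Finset.sum_add_distrib]
  simp only [← two_mul, ← Finset.mul_sum, ← mul_add]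

lemma deg_pos {K : ℕ} (a : Fin K → Fin K → ℕ) (hs : ∀ i j, a i j = a j i)
    (hc : (SimpleGraph.fromRel (fun i j : Fin K => 0 < a i j)).Connected)
    (hK : 2 ≤ K) (v : Fin K) : 1 ≤ degree a v := by
  have hnt : Nontrivial (Fin K) := Fin.nontrivial_iff_two_le.mpr hK
  obtain ⟨w, hw⟩ := exists_ne v
  obtain ⟨q⟩ := hc.preconnected v w
  cases q with
  | nil => exact absurd rfl hw.symm
  | @cons _ u _ h q =>
    rw [SimpleGraph.fromRel_adj] at h
    obtain ⟨hne, hor⟩ := h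
    have hpos : 0 < a v u := by
      rcases hor with h' | h'
      · exact h'
      · rw [hs]; exact h'
    have hmem : u ∈ Finset.univ.filter (fun w => w ≠ v) := by
      simp [hne.symm]
    have := Finset.single_le_sum (f := fun w => a v w) (fun i _ => Nat.zero_le _) hmem
    unfold degree
    omega

/-- If `p` is the number of genus-zero vertices of a stable graph of type
`(G, N)` on `K` vertices, then `2p ≤ 2(G - ∑ g_v) + K - 2 + N`. -/
theorem stmt3 (G N K : ℕ) (X : StableGraph G N K)
    (p : ℕ) (hp : p = (Finset.univ.filter (fun v => X.g v = 0)).card) :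
    2 * p ≤ 2 * (G - ∑ v, X.g v) + K + N - 2 := by
  have hK : 1 ≤ K := by
    have : Nonempty (Fin K) := X.conn.nonempty
    have := Fin.pos_iff_nonempty.mpr this
    omega
  have hgenus := X.genus
  have hmarks := X.marks
  have hhs := handshake X.a X.symm
  -- the key inequality
  have key : p = 0 ∨ 2 * p + K ≤ 2 * edgeCount X.a + N := by
    rcases Nat.lt_or_ge K 2 with hK2 | hK2
    · -- K = 1
      rcases Nat.eq_zero_or_pos p with h0 | h0
      · exact Or.inl h0
      · right
        have hpK : p ≤ K := by
          rw [hp]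
          calc (Finset.univ.filter (fun v => X.g v = 0)).card
              ≤ (Finset.univ : Finset (Fin K)).card := Finset.card_filter_le _ _
            _ = K := by simp
        have hK1 : K = 1 := by omega
        have hp1 : p = 1 := by omega
        -- get a genus-0 vertex
        have hne : (Finset.univ.filter (fun v => X.g v = 0)).Nonempty := by
          rw [← Finset.card_pos, ← hp]; omega
        obtain ⟨v, hv⟩ := hne
        simp only [Finset.mem_filter] at hv
        have h3 := X.stable v hv.2
        have hdeg : degree X.a v ≤ ∑ u, degree X.a u :=
          Finset.single_le_sum (fun i _ => Nat.zero_le _) (Finset.mem_univ v)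
        have hn : X.n v ≤ ∑ u, X.n u :=
          Finset.single_le_sum (fun i _ => Nat.zero_le _) (Finset.mem_univ v)
        omega
    · -- K ≥ 2
      right
      set s := Finset.univ.filter (fun v => X.g v = 0) with hs
      have hsplit : ∑ v ∈ s, (degree X.a v + X.n v)
            + ∑ v ∈ Finset.univ.filter (fun v => ¬ X.g v = 0), (degree X.a v + X.n v)
          = ∑ v, (degree X.a v + X.n v) :=
        Finset.sum_filter_add_sum_filter_not _ _ _
      have h1 : 3 * p ≤ ∑ v ∈ s, (degree X.a v + X.n v) := by
        rw [hp, mul_comm, ← smul_eq_mul]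
        apply Finset.card_nsmul_le_sum
        intro v hv
        simp only [hs, Finset.mem_filter] at hv
        exact X.stable v hv.2
      have h2 : K - p ≤ ∑ v ∈ Finset.univ.filter (fun v => ¬ X.g v = 0), (degree X.a v + X.n v) := by
        have hcard : (Finset.univ.filter (fun v => ¬ X.g v = 0)).card = K - p := by
          rw [hp, Finset.filter_not, Finset.card_sdiff_of_subset (Finset.filter_subset _ _)]
          simp [hs]
        calc K - p = (Finset.univ.filter (fun v => ¬ X.g v = 0)).card * 1 := by omega
          _ ≤ ∑ v ∈ Finset.univ.filter (fun v => ¬ X.g v = 0), (degree X.a v + X.n v) := by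
            rw [← smul_eq_mul]
            apply Finset.card_nsmul_le_sum
            intro v _
            have := deg_pos X.a X.symm X.conn hK2 v
            omega
      have htot : ∑ v, (degree X.a v + X.n v) = 2 * edgeCount X.a + N := by
        rw [Finset.sum_add_distrib, hhs, hmarks]
      have hpK : p ≤ K := by
        rw [hp]
        calc (Finset.univ.filter (fun v => X.g v = 0)).card
            ≤ (Finset.univ : Finset (Fin K)).card := Finset.card_filter_le _ _
          _ = K := by simp
      omega
  omega
end

section
/- Fix K ≥ 1 and a data matrix G = (g, n, l, a) with a symmetric. Say G is 'ordered' if it has no breaking position, i.e., for all j with 0 < j < K: (i) g_{j-1} ≤ g_j; (ii) if n_{j-1} > n_j then g_{j-1} < g_j; (iii) if l_{j-1} > l_j then g_{j-1} < g_j or n_{j-1} < n_j; (iv) for all i ∉ {j-1, j}, if a_{i,j-1} > a_{i,j} then g_{j-1} < g_j, or n_{j-1} < n_j, or l_{j-1} < l_j, or there exists i' < i with i' ∉ {j-1, j} and a_{i',j-1} < a_{i',j}. Then G is ordered if and only if G is ≺-minimal in the set {σ_{j-1,j} G : 0 < j < K} ∪ {G}, where ≺ is the lexicographic order on v(G) (concatenation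 of g, n, l and the strict upper triangle of a) and σ_{j-1,j} acts by relabeling indices. -/
open Finset

/-- A data matrix: the vectors `g`, `n`, `l` and the adjacency matrix `a`. -/
abbrev DataMatrix (K : ℕ) :=
  (Fin K → ℕ) × (Fin K → ℕ) × (Fin K → ℕ) × (Fin K → Fin K → ℕ)

/-- The vector `v(G)`: juxtaposition of `g`, `n`, `l` and the strictly upper
triangular part of `a`, read row by row. -/
def vvec {K : ℕ} (M : DataMatrix K) : List ℕ :=
  List.ofFn M.1 ++ List.ofFn M.2.1 ++ List.ofFn M.2.2.1 ++
    (List.finRange K).flatMap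
      (fun i => ((List.finRange K).filter (fun j => i < j)).map
        (fun j => M.2.2.2 i j))

/-- The order `≺`: lexicographic comparison of the vectors `v(·)`. -/
def prec {K : ℕ} (M N : DataMatrix K) : Prop :=
  List.Lex (· < ·) (vvec M) (vvec N)

/-- The action of a permutation on a data matrix. -/
def permAct {K : ℕ} (σ : Equiv.Perm (Fin K)) (M : DataMatrix K) : DataMatrix K :=
  (fun j => M.1 (σ j), fun j => M.2.1 (σ j), fun j => M.2.2.1 (σ j),
    fun i j => M.2.2.2 (σ i) (σ j))

lemma lex_cons_iff' {α} {r : α → α → Prop} {a b : α} {l m : List α} :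
    List.Lex r (a::l) (b::m) ↔ r a b ∨ (a = b ∧ List.Lex r l m) := by
  constructor
  · intro h
    cases h with
    | cons h => exact Or.inr ⟨rfl, h⟩
    | rel h => exact Or.inl h
  · rintro (h | ⟨rfl, h⟩)
    · exact List.Lex.rel h
    · exact List.Lex.cons h

lemma lex_append_iff' {α} {r : α → α → Prop} {A B C D : List α} (h : A.length = B.length) :
    List.Lex r (A++C) (B++D) ↔ List.Lex r A B ∨ (A = B ∧ List.Lex r C D) := by
  induction A generalizing B with
  | nil =>
    cases B with
    | nil => simp [List.not_lex_nil]
    | cons b B => simp at h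
  | cons a A ih =>
    cases B with
    | nil => simp at h
    | cons b B =>
      simp only [List.length_cons, Nat.add_right_cancel_iff] at h
      simp only [List.cons_append, lex_cons_iff', ih h, List.cons.injEq]
      tauto

lemma lex_map_sorted' {α} [Preorder α] {l : List α} (hl : List.Pairwise (·<·) l)
    (f f' : α → ℕ) :
    List.Lex (·<·) (l.map f) (l.map f') ↔
      ∃ x ∈ l, f x < f' x ∧ ∀ y ∈ l, y < x → f y = f' y := by
  induction l with
  | nil => simp [List.not_lex_nil]
  | cons a l ih =>
    have ha : ∀ y ∈ l, a < y := fun y hy => List.rel_of_pairwise_cons hl hy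
    simp only [List.map_cons, lex_cons_iff', ih hl.of_cons]
    constructor
    · rintro (h | ⟨he, x, hx, hfx, hall⟩)
      · exact ⟨a, List.mem_cons_self, h, fun y hy hya => by
          rcases List.mem_cons.1 hy with rfl | hy
          · exact absurd hya (lt_irrefl _)
          · exact absurd hya (asymm (ha y hy))⟩
      · exact ⟨x, List.mem_cons_of_mem _ hx, hfx, fun y hy hyx => by
          rcases List.mem_cons.1 hy with rfl | hy
          · exact he
          · exact hall y hy hyx⟩
    · rintro ⟨x, hx, hfx, hall⟩
      rcases List.mem_cons.1 hx with rfl | hx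
      · exact Or.inl hfx
      · exact Or.inr ⟨hall a (List.mem_cons_self) (ha x hx),
          x, hx, hfx, fun y hyl hyx => hall y (List.mem_cons_of_mem _ hyl) hyx⟩

lemma lex_flatMap_sorted' {α} [Preorder α] {l : List α} (hl : List.Pairwise (·<·) l)
    (F F' : α → List ℕ) (hlen : ∀ x ∈ l, (F x).length = (F' x).length) :
    List.Lex (·<·) (l.flatMap F) (l.flatMap F') ↔
      ∃ x ∈ l, List.Lex (·<·) (F x) (F' x) ∧ ∀ y ∈ l, y < x → F y = F' y := by
  induction l with
  | nil => simp [List.not_lex_nil]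
  | cons a l ih =>
    have ha : ∀ y ∈ l, a < y := fun y hy => List.rel_of_pairwise_cons hl hy
    have ihl := ih hl.of_cons (fun x hx => hlen x (List.mem_cons_of_mem _ hx))
    simp only [List.flatMap_cons,
      lex_append_iff' (hlen a (List.mem_cons_self)), ihl]
    constructor
    · rintro (h | ⟨he, x, hx, hfx, hall⟩)
      · exact ⟨a, List.mem_cons_self, h, fun y hy hya => by
          rcases List.mem_cons.1 hy with rfl | hy
          · exact absurd hya (lt_irrefl _)
          · exact absurd hya (asymm (ha y hy))⟩
      · exact ⟨x, List.mem_cons_of_mem _ hx, hfx, fun y hy hyx => by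
          rcases List.mem_cons.1 hy with rfl | hy
          · exact he
          · exact hall y hy hyx⟩
    · rintro ⟨x, hx, hfx, hall⟩
      rcases List.mem_cons.1 hx with rfl | hx
      · exact Or.inl hfx
      · exact Or.inr ⟨hall a (List.mem_cons_self) (ha x hx),
          x, hx, hfx, fun y hyl hyx => hall y (List.mem_cons_of_mem _ hyl) hyx⟩

section swap
variable {K : ℕ} (p q : Fin K)

lemma swap_ne {x : Fin K} (hx : x ≠ p) (hx' : x ≠ q) : Equiv.swap p q x = x :=
  Equiv.swap_apply_of_ne_of_ne hx hx'

lemma eq_map_swap_iff (hpq : p ≠ q) (f : Fin K → ℕ) :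
    (List.finRange K).map (fun x => f (Equiv.swap p q x)) = (List.finRange K).map f ↔
      f p = f q := by
  rw [List.map_eq_map_iff]
  constructor
  · intro h
    have := h p (List.mem_finRange p)
    simpa [Equiv.swap_apply_left] using this.symm
  · intro h x _
    rcases eq_or_ne x p with rfl | hxp
    · simpa [Equiv.swap_apply_left] using h.symm
    rcases eq_or_ne x q with rfl | hxq
    · simpa [Equiv.swap_apply_right] using h
    · rw [swap_ne p q hxp hxq]

lemma lex_map_swap_iff (hpq : p < q) (f : Fin K → ℕ) :
    List.Lex (·<·) ((List.finRange K).map (fun x => f (Equiv.swap p q x)))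
      ((List.finRange K).map f) ↔ f q < f p := by
  rw [lex_map_sorted' (List.pairwise_lt_finRange K)]
  constructor
  · rintro ⟨x, -, hfx, hy⟩
    rcases eq_or_ne x p with rfl | hxp
    · simpa [Equiv.swap_apply_left] using hfx
    rcases eq_or_ne x q with rfl | hxq
    · have hp := hy p (List.mem_finRange p) hpq
      rw [Equiv.swap_apply_left] at hp
      rw [Equiv.swap_apply_right, ← hp] at hfx
      exact absurd hfx (lt_irrefl _)
    · rw [swap_ne p q hxp hxq] at hfx
      exact absurd hfx (lt_irrefl _)
  · intro h
    refine ⟨p, List.mem_finRange p, by simpa [Equiv.swap_apply_left] using h,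
      fun y _ hyp => ?_⟩
    rw [swap_ne p q (ne_of_lt hyp) (ne_of_lt (lt_trans hyp hpq))]
end swap

lemma lex_ablock_swap_iff {K : ℕ} (p q : Fin K) (hq : (q:ℕ) = (p:ℕ)+1)
    (a : Fin K → Fin K → ℕ) (hsym : ∀ i j, a i j = a j i) :
    List.Lex (·<·)
      ((List.finRange K).flatMap (fun i => ((List.finRange K).filter (fun j => i < j)).map
        (fun j => a (Equiv.swap p q i) (Equiv.swap p q j))))
      ((List.finRange K).flatMap (fun i => ((List.finRange K).filter (fun j => i < j)).map
        (fun j => a i j))) ↔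
      ∃ i : Fin K, i ≠ p ∧ i ≠ q ∧ a i q < a i p ∧
        ∀ i' : Fin K, i' < i → i' ≠ p → i' ≠ q → a i' p = a i' q := by
  have hpq : p < q := by rw [Fin.lt_def]; omega
  have hpqne : p ≠ q := ne_of_lt hpq
  have hσp : Equiv.swap p q p = q := Equiv.swap_apply_left p q
  have hσq : Equiv.swap p q q = p := Equiv.swap_apply_right p q
  have hmem : ∀ (x j : Fin K), j ∈ (List.finRange K).filter (fun j => x < j) ↔ x < j := by
    intro x j; simp [List.mem_filter]
  have hsort : ∀ x : Fin K, List.Pairwise (·<·) ((List.finRange K).filter (fun j => x < j)) :=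
    fun x => (List.pairwise_lt_finRange K).filter _
  rw [lex_flatMap_sorted' (List.pairwise_lt_finRange K) _ _ (by intro x _; simp)]
  have hRE : ∀ y : Fin K,
      (((List.finRange K).filter (fun j => y < j)).map
          (fun j => a (Equiv.swap p q y) (Equiv.swap p q j)) =
        ((List.finRange K).filter (fun j => y < j)).map (fun j => a y j)) ↔
      ∀ j : Fin K, y < j → a (Equiv.swap p q y) (Equiv.swap p q j) = a y j := by
    intro y; rw [List.map_eq_map_iff]
    constructor
    · intro h j hj; exact h j ((hmem y j).2 hj)
    · intro h j hj; exact h j ((hmem y j).1 hj)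
  have hRL : ∀ x : Fin K,
      (List.Lex (·<·)
        (((List.finRange K).filter (fun j => x < j)).map
          (fun j => a (Equiv.swap p q x) (Equiv.swap p q j)))
        (((List.finRange K).filter (fun j => x < j)).map (fun j => a x j))) ↔
      ∃ j : Fin K, x < j ∧ a (Equiv.swap p q x) (Equiv.swap p q j) < a x j ∧
        ∀ j' : Fin K, x < j' → j' < j →
          a (Equiv.swap p q x) (Equiv.swap p q j') = a x j' := by
    intro x; rw [lex_map_sorted' (hsort x)]
    constructor
    · rintro ⟨j, hjm, h1, h2⟩
      exact ⟨j, (hmem x j).1 hjm, h1, fun j' h3 h4 => h2 j' ((hmem x j').2 h3) h4⟩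
    · rintro ⟨j, hjm, h1, h2⟩
      exact ⟨j, (hmem x j).2 hjm, h1, fun j' h3 h4 => h2 j' ((hmem x j').1 h3) h4⟩
  constructor
  · rintro ⟨x, -, hlex, hall⟩
    rw [hRL] at hlex
    obtain ⟨j, hxj, hlt, hmid⟩ := hlex
    by_cases hxp : x = p
    · rw [hxp] at hxj hlt hmid hall
      rw [hσp] at hlt hmid
      by_cases hjq : j = q
      · rw [hjq] at hlt
        rw [hσq, hsym q p] at hlt
        exact absurd hlt (lt_irrefl _)
      · have hqj : q < j := by
          rw [Fin.lt_def] at hxj ⊢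
          have := Fin.val_ne_of_ne hjq
          omega
        have hjp : j ≠ p := ne_of_gt (lt_trans hpq hqj)
        rw [swap_ne p q hjp hjq] at hlt
        refine ⟨j, hjp, hjq, by rw [hsym j q, hsym j p]; exact hlt, ?_⟩
        intro i' hi' hi'p hi'q
        have h1 : (i' : ℕ) < (p : ℕ) ∨ (q : ℕ) < (i' : ℕ) := by
          have := Fin.val_ne_of_ne hi'p
          have := Fin.val_ne_of_ne hi'q
          rw [Fin.lt_def] at hi'
          omega
        rcases h1 with h1 | h1
        · have hre := hall i' (List.mem_finRange i') (by rwa [Fin.lt_def])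
          rw [hRE] at hre
          have := hre p (by rwa [Fin.lt_def])
          rw [swap_ne p q hi'p hi'q, hσp] at this
          exact this.symm
        · have := hmid i' (by rw [Fin.lt_def]; omega) hi'
          rw [swap_ne p q hi'p hi'q] at this
          rw [hsym i' p, hsym i' q]
          exact this.symm
    · by_cases hxq : x = q
      · rw [hxq] at hxj hlt hall
        exfalso
        have hre := hall p (List.mem_finRange p) hpq
        rw [hRE] at hre
        have hqj : q < j := hxj
        have hjp : j ≠ p := ne_of_gt (lt_trans hpq hqj)
        have hjq : j ≠ q := ne_of_gt hqj
        rw [hσq, swap_ne p q hjp hjq] at hlt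
        have := hre j (lt_trans hpq hqj)
        rw [hσp, swap_ne p q hjp hjq] at this
        omega
      · have hx : (x : ℕ) < (p : ℕ) ∨ (q : ℕ) < (x : ℕ) := by
          have := Fin.val_ne_of_ne hxp
          have := Fin.val_ne_of_ne hxq
          omega
        rcases hx with hx | hx
        · -- x < p
          rw [swap_ne p q hxp hxq] at hlt hmid
          by_cases hjp : j = p
          · rw [hjp] at hlt
            rw [hσp] at hlt
            refine ⟨x, hxp, hxq, hlt, ?_⟩
            intro i' hi' hi'p hi'q
            have hre := hall i' (List.mem_finRange i') hi'
            rw [hRE] at hre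
            have := hre p (by rw [Fin.lt_def] at hi' ⊢; omega)
            rw [swap_ne p q hi'p hi'q, hσp] at this
            exact this.symm
          · by_cases hjq : j = q
            · rw [hjq] at hlt hmid
              exfalso
              have := hmid p (by rwa [Fin.lt_def]) hpq
              rw [hσp] at this
              rw [hσq] at hlt
              omega
            · rw [swap_ne p q hjp hjq] at hlt
              exact absurd hlt (lt_irrefl _)
        · -- q < x
          exfalso
          have hjp : j ≠ p := by
            have := Fin.val_ne_of_ne hxp
            rw [Fin.lt_def] at hxj
            intro h; subst h; omega
          have hjq : j ≠ q := by
            rw [Fin.lt_def] at hxj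
            intro h; subst h; omega
          rw [swap_ne p q hxp hxq, swap_ne p q hjp hjq] at hlt
          exact absurd hlt (lt_irrefl _)
  · rintro ⟨i, hip, hiq, hlt, hall⟩
    have hi : (i : ℕ) < (p : ℕ) ∨ (q : ℕ) < (i : ℕ) := by
      have := Fin.val_ne_of_ne hip
      have := Fin.val_ne_of_ne hiq
      omega
    have hREy : ∀ y : Fin K, (y : ℕ) < (p : ℕ) → (a y p = a y q) →
        ∀ j : Fin K, y < j → a (Equiv.swap p q y) (Equiv.swap p q j) = a y j := by
      intro y hyp he j hyj
      have hynp : y ≠ p := by intro h; subst h; omega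
      have hynq : y ≠ q := by
        intro h; subst h; omega
      rw [swap_ne p q hynp hynq]
      by_cases hjp : j = p
      · subst hjp; rw [hσp]; exact he.symm
      · by_cases hjq : j = q
        · subst hjq; rw [hσq]; exact he
        · rw [swap_ne p q hjp hjq]
    rcases hi with hi | hi
    · -- i < p : witness x = i
      refine ⟨i, List.mem_finRange i, ?_, ?_⟩
      · rw [hRL]
        refine ⟨p, by rwa [Fin.lt_def], ?_, ?_⟩
        · rw [swap_ne p q hip hiq, hσp]; exact hlt
        · intro j' h1 h2
          have hj'p : j' ≠ p := ne_of_lt h2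
          have hj'q : j' ≠ q := ne_of_lt (lt_trans h2 hpq)
          rw [swap_ne p q hip hiq, swap_ne p q hj'p hj'q]
      · intro y _ hyi
        rw [hRE]
        have hyp : (y : ℕ) < (p : ℕ) := by rw [Fin.lt_def] at hyi; omega
        have hynp : y ≠ p := by intro h; subst h; omega
        have hynq : y ≠ q := by intro h; subst h; omega
        exact hREy y hyp (hall y hyi hynp hynq)
    · -- q < i : witness x = p
      refine ⟨p, List.mem_finRange p, ?_, ?_⟩
      · rw [hRL]
        refine ⟨i, lt_trans hpq (by rwa [Fin.lt_def]), ?_, ?_⟩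
        · rw [hσp, swap_ne p q hip hiq, hsym q i, hsym p i]
          exact hlt
        · intro j' h1 h2
          rw [hσp]
          by_cases hj'q : j' = q
          · rw [hj'q, hσq]; exact hsym q p
          · have hj'p : j' ≠ p := ne_of_gt h1
            have hq' : (q : ℕ) < (j' : ℕ) := by
              have := Fin.val_ne_of_ne hj'q
              rw [Fin.lt_def] at h1
              omega
            rw [swap_ne p q hj'p hj'q]
            have := hall j' h2 hj'p hj'q
            rw [hsym q j', hsym p j']
            exact this.symm
      · intro y _ hyp
        rw [hRE]
        have hynp : y ≠ p := ne_of_lt hyp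
        have hynq : y ≠ q := ne_of_lt (lt_trans hyp hpq)
        exact hREy y (by rwa [Fin.lt_def] at hyp) (hall y (by rw [Fin.lt_def] at hyp ⊢; omega) hynp hynq) 

lemma prec_swap_iff {K : ℕ} (M : DataMatrix K) (hsym : ∀ i j, M.2.2.2 i j = M.2.2.2 j i)
    (p q : Fin K) (hq : (q:ℕ) = (p:ℕ)+1) :
    prec (permAct (Equiv.swap p q) M) M ↔
      (M.1 q < M.1 p) ∨
      (M.1 p = M.1 q ∧ M.2.1 q < M.2.1 p) ∨
      (M.1 p = M.1 q ∧ M.2.1 p = M.2.1 q ∧ M.2.2.1 q < M.2.2.1 p) ∨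
      (M.1 p = M.1 q ∧ M.2.1 p = M.2.1 q ∧ M.2.2.1 p = M.2.2.1 q ∧
        ∃ i : Fin K, i ≠ p ∧ i ≠ q ∧ M.2.2.2 i q < M.2.2.2 i p ∧
          ∀ i' : Fin K, i' < i → i' ≠ p → i' ≠ q → M.2.2.2 i' p = M.2.2.2 i' q) := by
  have hpq : p < q := by rw [Fin.lt_def]; omega
  show List.Lex _ (vvec (permAct (Equiv.swap p q) M)) (vvec M) ↔ _
  simp only [vvec, permAct, List.ofFn_eq_map]
  rw [lex_append_iff' (by simp), lex_append_iff' (by simp), lex_append_iff' (by simp)]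
  have happ : ∀ (A B C D : List ℕ), A.length = B.length → (A++C = B++D ↔ A=B ∧ C=D) :=
    fun A B C D h => ⟨fun he => ⟨List.append_inj_left he h, List.append_inj_right he h⟩,
      by rintro ⟨rfl, rfl⟩; rfl⟩
  rw [lex_map_swap_iff p q hpq, lex_map_swap_iff p q hpq, lex_map_swap_iff p q hpq,
    happ _ _ _ _ (by simp), happ _ _ _ _ (by simp),
    eq_map_swap_iff p q (ne_of_lt hpq), eq_map_swap_iff p q (ne_of_lt hpq),
    eq_map_swap_iff p q (ne_of_lt hpq),
    lex_ablock_swap_iff p q hq _ hsym]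
  rw [happ _ _ _ _ (by simp), eq_map_swap_iff p q (ne_of_lt hpq),
    eq_map_swap_iff p q (ne_of_lt hpq)]
  tauto

/-- `M` is ordered: it has no breaking position. -/
def OrderedData {K : ℕ} (M : DataMatrix K) : Prop :=
  ∀ (j : ℕ) (hj : j < K), 0 < j →
    ∀ (p q : Fin K), p = ⟨j - 1, by omega⟩ → q = ⟨j, hj⟩ →
    (M.1 p ≤ M.1 q) ∧
    (M.2.1 q < M.2.1 p → M.1 p < M.1 q) ∧
    (M.2.2.1 q < M.2.2.1 p → M.1 p < M.1 q ∨ M.2.1 p < M.2.1 q) ∧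
    (∀ i : Fin K, i ≠ p → i ≠ q → M.2.2.2 i q < M.2.2.2 i p →
      M.1 p < M.1 q ∨ M.2.1 p < M.2.1 q ∨ M.2.2.1 p < M.2.2.1 q ∨
      ∃ i' : Fin K, (i' : ℕ) < (i : ℕ) ∧ i' ≠ p ∧ i' ≠ q ∧
        M.2.2.2 i' p < M.2.2.2 i' q)

/-- Characterization: a data matrix with symmetric `a`-part is ordered (has no
breaking position) if and only if it is `≺`-minimal in the set consisting of
itself and its images under adjacent transpositions, i.e. no adjacent
transposition makes it strictly smaller. -/
theorem stmt9 (K : ℕ) (hK : 1 ≤ K) (M : DataMatrix K)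
    (hsym : ∀ i j, M.2.2.2 i j = M.2.2.2 j i) :
    OrderedData M ↔
      ∀ (j : ℕ) (hj : j < K), 0 < j →
        ¬ prec (permAct (Equiv.swap (⟨j - 1, by omega⟩ : Fin K) ⟨j, hj⟩) M) M := by
  classical
  constructor
  · intro hord j hj hj0 hprec
    set p : Fin K := ⟨j - 1, by omega⟩ with hp
    set q : Fin K := ⟨j, hj⟩ with hqq
    rw [prec_swap_iff M hsym p q (by simp [hp, hqq]; omega)] at hprec
    obtain ⟨h1, h2, h3, h4⟩ := hord j hj hj0 p q rfl rfl
    rcases hprec with h | ⟨he, h⟩ | ⟨he1, he2, h⟩ | ⟨he1, he2, he3, i, hip, hiq, hlt, hall⟩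
    · omega
    · have := h2 h; omega
    · rcases h3 h with h' | h' <;> omega
    · rcases h4 i hip hiq hlt with h' | h' | h' | ⟨i', hi'1, hi'2, hi'3, hi'4⟩
      · omega
      · omega
      · omega
      · have := hall i' (by rwa [Fin.lt_def]) hi'2 hi'3
        omega
  · intro hmin j hj hj0 p q hp hq
    have hnp := hmin j hj hj0
    rw [← hp, ← hq] at hnp
    rw [prec_swap_iff M hsym p q (by rw [hp, hq]; simp; omega)] at hnp
    push_neg at hnp
    obtain ⟨c1, c2, c3, c4⟩ := hnp
    refine ⟨c1, ?_, ?_, ?_⟩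
    · intro h
      rcases lt_or_eq_of_le c1 with h' | h'
      · exact h'
      · have := c2 h'; omega
    · intro h
      by_contra hcon
      push_neg at hcon
      have e1 : M.1 p = M.1 q := le_antisymm c1 hcon.1
      have e2 := c2 e1
      have e3 := c3 e1 (by omega)
      omega
    · intro i hip hiq hlt
      by_contra hcon
      push_neg at hcon
      obtain ⟨d1, d2, d3, hno⟩ := hcon
      have e1 : M.1 p = M.1 q := le_antisymm c1 d1
      have e2 : M.2.1 p = M.2.1 q := by have := c2 e1; omega
      have e3 : M.2.2.1 p = M.2.2.1 q := by have := c3 e1 e2; omega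
      have hS : ∃ m : ℕ, ∃ hm : m < K, (⟨m, hm⟩ : Fin K) ≠ p ∧ (⟨m, hm⟩ : Fin K) ≠ q ∧
          M.2.2.2 ⟨m, hm⟩ p ≠ M.2.2.2 ⟨m, hm⟩ q := by
        exact ⟨(i : ℕ), i.isLt, by simpa using hip, by simpa using hiq, by simpa using ne_of_gt hlt⟩
      obtain ⟨hm0, h0p, h0q, h0ne⟩ := Nat.find_spec hS
      set m0 := Nat.find hS with hm0def
      set i0 : Fin K := ⟨m0, hm0⟩ with hi0def
      have hle : m0 ≤ (i : ℕ) := Nat.find_min' hS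
        ⟨i.isLt, by simpa using hip, by simpa using hiq, by simpa using ne_of_gt hlt⟩
      rcases lt_or_gt_of_ne h0ne with hcase | hcase
      · have hne' : m0 ≠ (i : ℕ) := by
          intro h
          have : i0 = i := by rw [hi0def, Fin.ext_iff]; simpa using h
          rw [this] at hcase
          omega
        have := hno i0 (by exact lt_of_le_of_ne hle hne') h0p h0q
        omega
      · obtain ⟨i1, h1lt, h1p, h1q, h1ne⟩ := c4 e1 e2 e3 i0 h0p h0q hcase
        have : ¬ ((i1 : ℕ) < m0) := fun hc => Nat.find_min hS hc
          ⟨i1.isLt, by simpa using h1p, by simpa using h1q, by simpa using h1ne⟩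
        rw [Fin.lt_def] at h1lt
        simp only [hi0def] at h1lt
        omega
end

section
/- Fix K ≥ 1. For every data matrix G = (g, n, l, a) with a symmetric, there exists a permutation σ ∈ Σ_K such that σG is ordered (has no breaking position, in the sense of conditions (i)–(iv)). Consequently, the algorithm that generates only ordered matrices produces at least one representative of every Σ_K-orbit of data matrices. -/
open Finset

/-- Auxiliary measure for the descent argument: the vectors `g`, `n`, `l`
followed by the rows of the zeroed-out strictly upper triangular part of `a`,
all compared lexicographically as a list of lists. -/
def mu {K : ℕ} (N : DataMatrix K) : List (List ℕ) :=
  List.ofFn N.1 :: List.ofFn N.2.1 :: List.ofFn N.2.2.1 ::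
    List.ofFn (fun i => List.ofFn (fun j => if i < j then N.2.2.2 i j else 0))

theorem lex_aux {α : Type*} [LT α] :
    ∀ (k : ℕ) (l1 l2 : List α) (h1 : k < l1.length) (h2 : k < l2.length),
      (∀ m (hm1 : m < l1.length) (hm2 : m < l2.length), m < k → l1[m] = l2[m]) →
      l1[k] < l2[k] → List.Lex (· < ·) l1 l2 := by
  intro k
  induction k with
  | zero =>
    intro l1 l2 h1 h2 _ hlt
    match l1, l2 with
    | a :: t1, b :: t2 => exact List.Lex.rel (by simpa using hlt)
  | succ k ih =>
    intro l1 l2 h1 h2 hpre hlt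
    match l1, l2 with
    | a :: t1, b :: t2 =>
      have h0 : a = b := by exact hpre 0 (by simp) (by simp) (Nat.succ_pos k)
      subst h0
      exact List.Lex.cons (ih t1 t2 (by simpa using h1) (by simpa using h2)
        (fun m hm1 hm2 hmk => by
          exact hpre (m+1) (by simpa using hm1) (by simpa using hm2) (by omega))
        (by simpa using hlt))

theorem ofFn_lex {K : ℕ} {α : Type*} [LT α] (f g : Fin K → α) (i : Fin K)
    (hpre : ∀ k : Fin K, k < i → f k = g k) (hlt : f i < g i) :
    List.Lex (· < ·) (List.ofFn f) (List.ofFn g) := by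
  apply lex_aux i.val _ _ (by simp) (by simp)
  · intro m hm1 hm2 hmk
    rw [List.getElem_ofFn, List.getElem_ofFn]
    exact hpre ⟨m, by simpa using hm1⟩ hmk
  · rw [List.getElem_ofFn, List.getElem_ofFn]
    simpa using hlt

theorem key_dec {K : ℕ} (N : DataMatrix K)
    (hsym : ∀ i j, N.2.2.2 i j = N.2.2.2 j i)
    (h : ¬ OrderedData N) :
    ∃ τ : Equiv.Perm (Fin K), List.Lex (· < ·) (mu (permAct τ N)) (mu N) := by
  obtain ⟨g, n, l, A⟩ := N
  simp only at hsym
  unfold OrderedData at h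
  push_neg at h
  obtain ⟨j, hj, hj0, p, q, hp, hq, hbreak⟩ := h
  simp only at hbreak
  have hpv : (p : ℕ) = j - 1 := by rw [hp]
  have hqv : (q : ℕ) = j := by rw [hq]
  have hpq1 : (p : ℕ) + 1 = (q : ℕ) := by omega
  have hplt : p < q := by rw [Fin.lt_def]; omega
  have hpneq : p ≠ q := ne_of_lt hplt
  set τ := Equiv.swap p q with hτdef
  have hτp : τ p = q := Equiv.swap_apply_left p q
  have hτq : τ q = p := Equiv.swap_apply_right p q
  have hτo : ∀ x, x ≠ p → x ≠ q → τ x = x := fun x h1 h2 =>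
    Equiv.swap_apply_of_ne_of_ne h1 h2
  refine ⟨τ, ?_⟩
  simp only [mu, permAct]
  by_cases h1 : g p ≤ g q
  · by_cases h2 : n q < n p → g p < g q
    · by_cases h3 : l q < l p → g p < g q ∨ n p < n q
      · -- condition (iv) must fail
        obtain ⟨i, hip, hiq, hiv, hng, hnn, hnl, hlast⟩ := hbreak h1 h2 h3
        have geq : g p = g q := le_antisymm h1 hng
        have neq : n p = n q := by
          have h2' : ¬ n q < n p := fun hh => absurd (h2 hh) (by rw [geq]; exact lt_irrefl _)
          exact le_antisymm (le_of_not_gt h2') hnn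
        have leq : l p = l q := by
          have h3' : ¬ l q < l p := fun hh => by
            rcases h3 hh with hc | hc
            · exact absurd hc (by rw [geq]; exact lt_irrefl _)
            · exact absurd hc (by rw [neq]; exact lt_irrefl _)
          exact le_antisymm (le_of_not_gt h3') hnl
        have eg : List.ofFn (fun x => g (τ x)) = List.ofFn g := by
          congr 1; funext x
          by_cases hxp : x = p
          · subst hxp; rw [hτp, geq]
          · by_cases hxq : x = q
            · subst hxq; rw [hτq, geq]
            · rw [hτo x hxp hxq]
        have en : List.ofFn (fun x => n (τ x)) = List.ofFn n := by
          congr 1; funext x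
          by_cases hxp : x = p
          · subst hxp; rw [hτp, neq]
          · by_cases hxq : x = q
            · subst hxq; rw [hτq, neq]
            · rw [hτo x hxp hxq]
        have el : List.ofFn (fun x => l (τ x)) = List.ofFn l := by
          congr 1; funext x
          by_cases hxp : x = p
          · subst hxp; rw [hτp, leq]
          · by_cases hxq : x = q
            · subst hxq; rw [hτq, leq]
            · rw [hτo x hxp hxq]
        rw [eg, en, el]
        refine List.Lex.cons (List.Lex.cons (List.Lex.cons ?_))
        -- the matrix part strictly decreases
        classical
        set s : Finset (Fin K) :=
          Finset.univ.filter (fun x => x ≠ p ∧ x ≠ q ∧ A x p ≠ A x q) with hsdef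
        have hmems : ∀ x, x ∈ s ↔ x ≠ p ∧ x ≠ q ∧ A x p ≠ A x q := by
          intro x; simp [hsdef]
        have hsne : s.Nonempty := ⟨i, (hmems i).mpr ⟨hip, hiq, (ne_of_lt hiv).symm⟩⟩
        set i₀ := s.min' hsne with hi₀def
        obtain ⟨hi₀p, hi₀q, hi₀ne⟩ := (hmems i₀).mp (s.min'_mem hsne)
        have hminlt : ∀ x, x < i₀ → x ≠ p → x ≠ q → A x p = A x q := by
          intro x hx hxp hxq
          by_contra hcon
          exact absurd (s.min'_le x ((hmems x).mpr ⟨hxp, hxq, hcon⟩)) (not_le.mpr hx)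
        have hi₀i : i₀ ≤ i := s.min'_le i ((hmems i).mpr ⟨hip, hiq, (ne_of_lt hiv).symm⟩)
        have hlt0 : A i₀ q < A i₀ p := by
          rcases lt_or_eq_of_le hi₀i with hlt | heq
          · exact lt_of_le_of_ne (hlast i₀ (by exact_mod_cast hlt) hi₀p hi₀q)
              (Ne.symm hi₀ne)
          · rw [heq]; exact hiv
        rcases lt_or_gt_of_ne hi₀p with hcase | hcase
        · -- i₀ < p : first change in row i₀, column p
          apply ofFn_lex _ _ i₀
          · intro x hx
            have hxp : x ≠ p := ne_of_lt (lt_trans hx hcase)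
            have hxq : x ≠ q := ne_of_lt (lt_trans (lt_trans hx hcase) hplt)
            congr 1; funext y
            rw [hτo x hxp hxq]
            by_cases hyp : y = p
            · have hxy : x < p := lt_trans hx hcase
              rw [hyp, hτp, if_pos hxy, if_pos hxy]
              exact (hminlt x hx hxp hxq).symm
            · by_cases hyq : y = q
              · have hxy : x < q := lt_trans (lt_trans hx hcase) hplt
                rw [hyq, hτq, if_pos hxy, if_pos hxy]
                exact hminlt x hx hxp hxq
              · rw [hτo y hyp hyq]
          · -- row i₀ strictly decreases at column p
            show List.Lex (· < ·) _ _
            apply ofFn_lex _ _ p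
            · intro y hy
              have hyp : y ≠ p := ne_of_lt hy
              have hyq : y ≠ q := ne_of_lt (lt_trans hy hplt)
              rw [hτo i₀ hi₀p hi₀q, hτo y hyp hyq]
            · rw [if_pos hcase, if_pos hcase, hτo i₀ hi₀p hi₀q, hτp]
              exact hlt0
        · -- p < i₀ : first change in row p, column i₀
          apply ofFn_lex _ _ p
          · intro x hx
            have hxp : x ≠ p := ne_of_lt hx
            have hxq : x ≠ q := ne_of_lt (lt_trans hx hplt)
            have hxi₀ : x < i₀ := lt_trans hx hcase
            congr 1; funext y
            rw [hτo x hxp hxq]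
            by_cases hyp : y = p
            · rw [hyp, hτp, if_pos hx, if_pos hx]
              exact (hminlt x hxi₀ hxp hxq).symm
            · by_cases hyq : y = q
              · have hxy : x < q := lt_trans hx hplt
                rw [hyq, hτq, if_pos hxy, if_pos hxy]
                exact hminlt x hxi₀ hxp hxq
              · rw [hτo y hyp hyq]
          · -- row p strictly decreases at column i₀
            show List.Lex (· < ·) _ _
            apply ofFn_lex _ _ i₀
            · intro y hy
              by_cases hyq : y = q
              · rw [hyq, if_pos hplt, if_pos hplt, hτp, hτq]
                exact hsym q p
              · by_cases hpy : p < y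
                · have hyp : y ≠ p := (ne_of_lt hpy).symm
                  rw [if_pos hpy, if_pos hpy, hτp, hτo y hyp hyq]
                  calc A q y = A y q := hsym q y
                    _ = A y p := (hminlt y hy hyp hyq).symm
                    _ = A p y := hsym y p
                · rw [if_neg hpy, if_neg hpy]
            · rw [if_pos hcase, if_pos hcase, hτp, hτo i₀ hi₀p hi₀q]
              calc A q i₀ = A i₀ q := hsym q i₀
                _ < A i₀ p := hlt0
                _ = A p i₀ := hsym i₀ p
      · -- condition (iii) fails
        push_neg at h3
        obtain ⟨hl, hng, hnn⟩ := h3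
        have geq : g p = g q := le_antisymm h1 hng
        have neq : n p = n q := by
          have h2' : ¬ n q < n p := fun hh => absurd (h2 hh) (by rw [geq]; exact lt_irrefl _)
          exact le_antisymm (le_of_not_gt h2') hnn
        have eg : List.ofFn (fun x => g (τ x)) = List.ofFn g := by
          congr 1; funext x
          by_cases hxp : x = p
          · subst hxp; rw [hτp, geq]
          · by_cases hxq : x = q
            · subst hxq; rw [hτq, geq]
            · rw [hτo x hxp hxq]
        have en : List.ofFn (fun x => n (τ x)) = List.ofFn n := by
          congr 1; funext x
          by_cases hxp : x = p
          · subst hxp; rw [hτp, neq]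
          · by_cases hxq : x = q
            · subst hxq; rw [hτq, neq]
            · rw [hτo x hxp hxq]
        rw [eg, en]
        refine List.Lex.cons (List.Lex.cons (List.Lex.rel ?_))
        show List.Lex (· < ·) _ _
        apply ofFn_lex _ _ p
        · intro k hk
          exact congrArg l (hτo k (ne_of_lt hk) (ne_of_lt (lt_trans hk hplt)))
        · rw [hτp]; exact hl
    · -- condition (ii) fails
      push_neg at h2
      obtain ⟨hn, hng⟩ := h2
      have geq : g p = g q := le_antisymm h1 hng
      have eg : List.ofFn (fun x => g (τ x)) = List.ofFn g := by
        congr 1; funext x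
        by_cases hxp : x = p
        · subst hxp; rw [hτp, geq]
        · by_cases hxq : x = q
          · subst hxq; rw [hτq, geq]
          · rw [hτo x hxp hxq]
      rw [eg]
      refine List.Lex.cons (List.Lex.rel ?_)
      show List.Lex (· < ·) _ _
      apply ofFn_lex _ _ p
      · intro k hk
        exact congrArg n (hτo k (ne_of_lt hk) (ne_of_lt (lt_trans hk hplt)))
      · rw [hτp]; exact hn
  · -- condition (i) fails
    push_neg at h1
    refine List.Lex.rel ?_
    show List.Lex (· < ·) _ _
    apply ofFn_lex _ _ p
    · intro k hk
      exact congrArg g (hτo k (ne_of_lt hk) (ne_of_lt (lt_trans hk hplt)))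
    · rw [hτp]; exact h1

/-- Every data matrix with symmetric `a`-part can be brought to an ordered one
by a permutation; hence generating only ordered matrices produces at least one
representative of every `Σ_K`-orbit. -/
theorem stmt10 (K : ℕ) (hK : 1 ≤ K) (M : DataMatrix K)
    (hsym : ∀ i j, M.2.2.2 i j = M.2.2.2 j i) :
    ∃ σ : Equiv.Perm (Fin K), OrderedData (permAct σ M) := by
  obtain ⟨σ, -, hmin⟩ := Finset.exists_min_image (Finset.univ : Finset (Equiv.Perm (Fin K)))
    (fun σ => mu (permAct σ M)) ⟨1, Finset.mem_univ 1⟩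
  refine ⟨σ, ?_⟩
  by_contra hnot
  obtain ⟨τ, hτ⟩ := key_dec (permAct σ M) (fun i j => hsym (σ i) (σ j)) hnot
  have hcomp : permAct τ (permAct σ M) = permAct (σ * τ) M := by
    simp only [permAct, Equiv.Perm.mul_apply]
  rw [hcomp] at hτ
  have hlt : mu (permAct (σ * τ) M) < mu (permAct σ M) := hτ
  exact absurd (hmin (σ * τ) (Finset.mem_univ _)) (not_le.mpr hlt)
end

section
/- Fix K ≥ 1 and suppose G = (g, n, l, a) is a data matrix (a symmetric) that is not ordered, i.e., has a breaking position. Then there exists j with 0 < j < K such that σ_{j-1,j} G ≺ G. Conversely, if σ_{j-1,j} G ≺ G for some 0 < j < K, then G has a breaking position. -/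
open Finset

namespace Stmt11Aux

/-! ### Generic lemmas about `List.Lex` -/

lemma lex_cons_iff {a b : ℕ} {l l' : List ℕ} :
    List.Lex (· < ·) (a :: l) (b :: l') ↔ a < b ∨ (a = b ∧ List.Lex (· < ·) l l') := by
  constructor
  · intro h
    cases h with
    | rel h => exact Or.inl h
    | cons h => exact Or.inr ⟨rfl, h⟩
  · rintro (h | ⟨rfl, h⟩)
    · exact List.Lex.rel h
    · exact List.Lex.cons h

lemma lex_append_iff {A B : List ℕ} (C D : List ℕ) (h : A.length = B.length) :
    List.Lex (· < ·) (A ++ C) (B ++ D) ↔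
      List.Lex (· < ·) A B ∨ (A = B ∧ List.Lex (· < ·) C D) := by
  induction A generalizing B with
  | nil =>
    cases B with
    | nil => simp [List.not_lex_nil]
    | cons b B => simp at h
  | cons a A ih =>
    cases B with
    | nil => simp at h
    | cons b B =>
      simp only [List.cons_append, lex_cons_iff, List.cons.injEq]
      rw [ih (by simpa using h)]
      tauto

/-- Lex comparison of two maps over the same strictly sorted list. -/
lemma lex_map_sorted {α : Type*} {s : α → α → Prop} (hs : ∀ x y, s x y → ¬ s y x)
    {L : List α} (hL : L.Pairwise s) (F G : α → ℕ) :
    List.Lex (· < ·) (L.map F) (L.map G) ↔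
      ∃ x ∈ L, F x < G x ∧ ∀ y ∈ L, s y x → F y = G y := by
  induction L with
  | nil => simp [List.not_lex_nil]
  | cons z L ih =>
    rw [List.pairwise_cons] at hL
    simp only [List.map_cons, lex_cons_iff, ih hL.2]
    constructor
    · rintro (h | ⟨hz, x, hx, h1, h2⟩)
      · refine ⟨z, List.mem_cons_self .., h, ?_⟩
        rintro y hy hyz
        rcases List.mem_cons.1 hy with rfl | hy
        · exact absurd hyz (hs _ _ hyz)
        · exact absurd hyz (hs _ _ (hL.1 y hy))
      · refine ⟨x, List.mem_cons_of_mem _ hx, h1, ?_⟩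
        rintro y hy hyx
        rcases List.mem_cons.1 hy with rfl | hy
        · exact hz
        · exact h2 y hy hyx
    · rintro ⟨x, hx, h1, h2⟩
      rcases List.mem_cons.1 hx with rfl | hx
      · exact Or.inl h1
      · have hz : F z = G z := h2 z (List.mem_cons_self ..) (hL.1 x hx)
        exact Or.inr ⟨hz, x, hx, h1, fun y hy hyx => h2 y (List.mem_cons_of_mem _ hy) hyx⟩

/-! ### Vector blocks under an adjacent swap -/

variable {K : ℕ}

lemma fin_ne_of_lt {x y : Fin K} (h : (x : ℕ) < (y : ℕ)) : x ≠ y := by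
  intro e; rw [e] at h; omega

/-- Lex comparison of `f ∘ swap p q` against `f`, as lists over `finRange`. -/
lemma vec_block_lex (f : Fin K → ℕ) (p q : Fin K) (hpq : (p : ℕ) < (q : ℕ)) :
    (List.Lex (· < ·) ((List.finRange K).map (fun x => f (Equiv.swap p q x)))
        ((List.finRange K).map f)) ↔ f q < f p := by
  rw [lex_map_sorted (s := (· < ·)) (fun x y h h' => absurd (h.trans h') (lt_irrefl _))
    (List.pairwise_lt_finRange K)]
  constructor
  · rintro ⟨x, -, h1, h2⟩
    by_cases hxp : x = p
    · rw [hxp, Equiv.swap_apply_left] at h1; exact h1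
    by_cases hxq : x = q
    · have hp := h2 p (List.mem_finRange p) (by rw [hxq]; exact hpq)
      rw [Equiv.swap_apply_left] at hp
      rw [hxq, Equiv.swap_apply_right] at h1
      omega
    · rw [Equiv.swap_apply_of_ne_of_ne hxp hxq] at h1; omega
  · intro h
    refine ⟨p, List.mem_finRange p, by rwa [Equiv.swap_apply_left], ?_⟩
    intro y _ hy
    rw [Equiv.swap_apply_of_ne_of_ne (fin_ne_of_lt hy) (fin_ne_of_lt (by omega))]

lemma vec_block_eq (f : Fin K → ℕ) (p q : Fin K) (hpq : (p : ℕ) < (q : ℕ)) :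
    ((List.finRange K).map (fun x => f (Equiv.swap p q x)) = (List.finRange K).map f) ↔
      f p = f q := by
  rw [List.map_inj_left]
  constructor
  · intro h
    have := h p (List.mem_finRange p)
    rw [Equiv.swap_apply_left] at this
    exact this.symm
  · intro h x _
    by_cases hxp : x = p
    · rw [hxp, Equiv.swap_apply_left]; exact h.symm
    by_cases hxq : x = q
    · rw [hxq, Equiv.swap_apply_right]; exact h
    · rw [Equiv.swap_apply_of_ne_of_ne hxp hxq]

/-! ### The pair list for the `a`-block -/

/-- The list of strictly upper-triangular index pairs, row by row. -/
def Pairs (K : ℕ) : List (Fin K × Fin K) :=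
  (List.finRange K).flatMap
    (fun i => ((List.finRange K).filter (fun j => i < j)).map (fun j => (i, j)))

lemma block4_eq_map (a : Fin K → Fin K → ℕ) :
    ((List.finRange K).flatMap
      (fun i => ((List.finRange K).filter (fun j => i < j)).map (fun j => a i j)))
      = (Pairs K).map (fun x => a x.1 x.2) := by
  rw [Pairs, List.map_flatMap]
  simp [List.map_map, Function.comp_def]

lemma mem_pairs {x : Fin K × Fin K} : x ∈ Pairs K ↔ (x.1 : ℕ) < (x.2 : ℕ) := by
  obtain ⟨r, c⟩ := x
  constructor
  · intro h
    simp only [Pairs, List.mem_flatMap, List.mem_map, List.mem_filter] at h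
    obtain ⟨i, -, j, hj, e⟩ := h
    rw [Prod.mk.injEq] at e
    obtain ⟨rfl, rfl⟩ := e
    simpa using hj.2
  · intro h
    simp only [Pairs, List.mem_flatMap, List.mem_map, List.mem_filter]
    exact ⟨r, List.mem_finRange r, c, ⟨List.mem_finRange c, by simpa using h⟩, rfl⟩

/-- Row-major order on pairs. -/
abbrev pOrd (x y : Fin K × Fin K) : Prop :=
  (x.1 : ℕ) < (y.1 : ℕ) ∨ ((x.1 : ℕ) = (y.1 : ℕ) ∧ (x.2 : ℕ) < (y.2 : ℕ))

lemma pOrd_asymm : ∀ x y : Fin K × Fin K, pOrd x y → ¬ pOrd y x := by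
  rintro x y h h'
  rcases h with h | ⟨h1, h2⟩ <;> rcases h' with h' | ⟨h1', h2'⟩ <;> omega

lemma pairs_sorted : (Pairs K).Pairwise pOrd := by
  rw [Pairs, List.flatMap_def, List.pairwise_flatten]
  constructor
  · intro l hl
    rw [List.mem_map] at hl
    obtain ⟨i, -, rfl⟩ := hl
    rw [List.pairwise_map]
    exact ((List.pairwise_lt_finRange K).filter _).imp
      (fun h => Or.inr ⟨rfl, by exact_mod_cast h⟩)
  · rw [List.pairwise_map]
    exact (List.pairwise_lt_finRange K).imp
      (fun {i i'} h => by
        rintro x hx y hy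
        rw [List.mem_map] at hx hy
        obtain ⟨j, -, rfl⟩ := hx
        obtain ⟨j', -, rfl⟩ := hy
        exact Or.inl (by exact_mod_cast h))

/-! ### The `a`-block comparison under an adjacent swap -/

/-- The target condition for the `a`-block. -/
abbrev T (a : Fin K → Fin K → ℕ) (p q : Fin K) : Prop :=
  ∃ i : Fin K, i ≠ p ∧ i ≠ q ∧ a i q < a i p ∧
    ∀ i' : Fin K, (i' : ℕ) < (i : ℕ) → i' ≠ p → i' ≠ q → a i' p = a i' q

section ABlock

variable {a : Fin K → Fin K → ℕ} {p q : Fin K}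

lemma swap_fix {y : Fin K} (h1 : y ≠ p) (h2 : y ≠ q) : Equiv.swap p q y = y :=
  Equiv.swap_apply_of_ne_of_ne h1 h2

variable (hsym : ∀ i j, a i j = a j i) (hpq : (p : ℕ) + 1 = (q : ℕ))
include hsym hpq

lemma ablock_lex :
    List.Lex (· < ·) ((Pairs K).map (fun x => a (Equiv.swap p q x.1) (Equiv.swap p q x.2)))
        ((Pairs K).map (fun x => a x.1 x.2)) ↔ T a p q := by
  rw [lex_map_sorted pOrd_asymm pairs_sorted]
  constructor
  · rintro ⟨⟨r, c⟩, hx0, h1, h2⟩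
    have hx : (r : ℕ) < (c : ℕ) := mem_pairs.1 hx0
    have h1' : a (Equiv.swap p q r) (Equiv.swap p q c) < a r c := h1
    clear h1 hx0
    by_cases hrp : r = p
    · rw [hrp] at h1' hx
      by_cases hcq : c = q
      · rw [hcq, Equiv.swap_apply_left, Equiv.swap_apply_right, hsym q p] at h1'
        omega
      · have hcq' : (q : ℕ) < (c : ℕ) := by
          have : (c : ℕ) ≠ (q : ℕ) := fun e => hcq (Fin.ext e)
          omega
        have hcp : c ≠ p := (fin_ne_of_lt (by omega)).symm
        rw [Equiv.swap_apply_left, swap_fix hcp hcq] at h1'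
        refine ⟨c, hcp, hcq, by rw [hsym c q, hsym c p]; exact h1', ?_⟩
        intro i' hi' hip hiq
        have hip' : (i' : ℕ) ≠ (p : ℕ) := fun e => hip (Fin.ext e)
        rcases lt_or_gt_of_ne hip' with hlt | hgt
        · have h3 : a (Equiv.swap p q i') (Equiv.swap p q p) = a i' p :=
            h2 (i', p) (mem_pairs.2 (show ((i':ℕ) < (p:ℕ)) by omega))
              (Or.inl (show ((i':ℕ) < (r:ℕ)) by rw [hrp]; exact hlt))
          rw [Equiv.swap_apply_left, swap_fix hip hiq] at h3
          exact h3.symm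
        · have h3 : a (Equiv.swap p q p) (Equiv.swap p q i') = a p i' :=
            h2 (p, i') (mem_pairs.2 (show ((p:ℕ) < (i':ℕ)) by omega))
              (Or.inr ⟨show ((p:ℕ) = (r:ℕ)) by rw [hrp], show ((i':ℕ) < (c:ℕ)) from hi'⟩)
          rw [Equiv.swap_apply_left, swap_fix hip hiq] at h3
          rw [hsym q i', hsym p i'] at h3
          exact h3.symm
    by_cases hrq : r = q
    · rw [hrq] at h1' hx
      have hcp : c ≠ p := (fin_ne_of_lt (by omega)).symm
      have hcq : c ≠ q := (fin_ne_of_lt hx).symm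
      rw [Equiv.swap_apply_right, swap_fix hcp hcq] at h1'
      have h3 : a (Equiv.swap p q p) (Equiv.swap p q c) = a p c :=
        h2 (p, c) (mem_pairs.2 (show ((p:ℕ) < (c:ℕ)) by omega))
          (Or.inl (show ((p:ℕ) < (r:ℕ)) by rw [hrq]; omega))
      rw [Equiv.swap_apply_left, swap_fix hcp hcq] at h3
      omega
    · rw [swap_fix hrp hrq] at h1'
      by_cases hcp : c = p
      · rw [hcp] at h1' hx
        rw [Equiv.swap_apply_left] at h1'
        refine ⟨r, hrp, hrq, h1', ?_⟩
        intro i' hi' hip hiq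
        have h3 : a (Equiv.swap p q i') (Equiv.swap p q p) = a i' p :=
          h2 (i', p) (mem_pairs.2 (show ((i':ℕ) < (p:ℕ)) by omega))
            (Or.inl (show ((i':ℕ) < (r:ℕ)) by omega))
        rw [Equiv.swap_apply_left, swap_fix hip hiq] at h3
        exact h3.symm
      by_cases hcq : c = q
      · rw [hcq] at h1' hx
        have hrltp : (r : ℕ) < (p : ℕ) := by
          have : (r : ℕ) ≠ (p : ℕ) := fun e => hrp (Fin.ext e)
          omega
        rw [Equiv.swap_apply_right] at h1'
        have h3 : a (Equiv.swap p q r) (Equiv.swap p q p) = a r p :=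
          h2 (r, p) (mem_pairs.2 (show ((r:ℕ) < (p:ℕ)) from hrltp))
            (Or.inr ⟨rfl, show ((p:ℕ) < (c:ℕ)) by rw [hcq]; omega⟩)
        rw [Equiv.swap_apply_left, swap_fix hrp hrq] at h3
        omega
      · rw [swap_fix hcp hcq] at h1'; omega
  · rintro ⟨i, hip, hiq, hlt, hmin⟩
    have hip' : (i : ℕ) ≠ (p : ℕ) := fun e => hip (Fin.ext e)
    have hiq' : (i : ℕ) ≠ (q : ℕ) := fun e => hiq (Fin.ext e)
    rcases lt_or_gt_of_ne hip' with hi | hi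
    · -- i < p : witness pair (i, p)
      refine ⟨(i, p), mem_pairs.2 (show ((i:ℕ) < (p:ℕ)) from hi), ?_, ?_⟩
      · show a (Equiv.swap p q i) (Equiv.swap p q p) < a i p
        rw [swap_fix hip hiq, Equiv.swap_apply_left]
        exact hlt
      · rintro ⟨r, c⟩ hy0 hord
        have hy : (r : ℕ) < (c : ℕ) := mem_pairs.1 hy0
        show a (Equiv.swap p q r) (Equiv.swap p q c) = a r c
        rcases hord with hord | ⟨hord1, hord2⟩
        · simp only at hord
          have hrp : r ≠ p := fin_ne_of_lt (by omega)
          have hrq : r ≠ q := fin_ne_of_lt (by omega)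
          rw [swap_fix hrp hrq]
          by_cases hcp : c = p
          · rw [hcp, Equiv.swap_apply_left]
            exact (hmin r hord hrp hrq).symm
          by_cases hcq : c = q
          · rw [hcq, Equiv.swap_apply_right]
            exact hmin r hord hrp hrq
          · rw [swap_fix hcp hcq]
        · simp only at hord1 hord2
          have hrp : r ≠ p := fin_ne_of_lt (by omega)
          have hrq : r ≠ q := fin_ne_of_lt (by omega)
          have hcp : c ≠ p := fin_ne_of_lt (by omega)
          have hcq : c ≠ q := fin_ne_of_lt (by omega)
          rw [swap_fix hrp hrq, swap_fix hcp hcq]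
    · -- i > q : witness pair (p, i)
      have hi2 : (q : ℕ) < (i : ℕ) := by omega
      refine ⟨(p, i), mem_pairs.2 (show ((p:ℕ) < (i:ℕ)) by omega), ?_, ?_⟩
      · show a (Equiv.swap p q p) (Equiv.swap p q i) < a p i
        rw [Equiv.swap_apply_left, swap_fix hip hiq, hsym q i, hsym p i]
        exact hlt
      · rintro ⟨r, c⟩ hy0 hord
        have hy : (r : ℕ) < (c : ℕ) := mem_pairs.1 hy0
        show a (Equiv.swap p q r) (Equiv.swap p q c) = a r c
        rcases hord with hord | ⟨hord1, hord2⟩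
        · simp only at hord
          have hrp : r ≠ p := fin_ne_of_lt (by omega)
          have hrq : r ≠ q := fin_ne_of_lt (by omega)
          rw [swap_fix hrp hrq]
          by_cases hcp : c = p
          · rw [hcp, Equiv.swap_apply_left]
            exact (hmin r (by omega) hrp hrq).symm
          by_cases hcq : c = q
          · rw [hcq, Equiv.swap_apply_right]
            exact hmin r (by omega) hrp hrq
          · rw [swap_fix hcp hcq]
        · simp only at hord1 hord2
          have hrp : r = p := Fin.ext hord1
          rw [hrp] at hy ⊢
          rw [Equiv.swap_apply_left]
          by_cases hcq : c = q
          · rw [hcq, Equiv.swap_apply_right]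
            exact hsym q p
          · have hcp : c ≠ p := (fin_ne_of_lt hy).symm
            have hcgt : (q : ℕ) < (c : ℕ) := by
              have : (c : ℕ) ≠ (q : ℕ) := fun e => hcq (Fin.ext e)
              omega
            rw [swap_fix hcp hcq, hsym q c, hsym p c]
            exact (hmin c hord2 hcp hcq).symm

lemma ablock_eq :
    ((Pairs K).map (fun x => a (Equiv.swap p q x.1) (Equiv.swap p q x.2)) =
        (Pairs K).map (fun x => a x.1 x.2)) ↔
      ∀ i : Fin K, i ≠ p → i ≠ q → a i p = a i q := by
  rw [List.map_inj_left]
  constructor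
  · intro h i hip hiq
    have hip' : (i : ℕ) ≠ (p : ℕ) := fun e => hip (Fin.ext e)
    rcases lt_or_gt_of_ne hip' with hi | hi
    · have h3 : a (Equiv.swap p q i) (Equiv.swap p q p) = a i p :=
        h (i, p) (mem_pairs.2 (show ((i:ℕ) < (p:ℕ)) from hi))
      rw [Equiv.swap_apply_left, swap_fix hip hiq] at h3
      exact h3.symm
    · have hi2 : (q : ℕ) < (i : ℕ) := by
        have : (i : ℕ) ≠ (q : ℕ) := fun e => hiq (Fin.ext e)
        omega
      have h3 : a (Equiv.swap p q p) (Equiv.swap p q i) = a p i :=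
        h (p, i) (mem_pairs.2 (show ((p:ℕ) < (i:ℕ)) by omega))
      rw [Equiv.swap_apply_left, swap_fix hip hiq, hsym q i, hsym p i] at h3
      exact h3.symm
  · rintro h ⟨r, c⟩ hy0
    have hy : (r : ℕ) < (c : ℕ) := mem_pairs.1 hy0
    show a (Equiv.swap p q r) (Equiv.swap p q c) = a r c
    by_cases hrp : r = p
    · rw [hrp] at hy ⊢
      rw [Equiv.swap_apply_left]
      by_cases hcq : c = q
      · rw [hcq, Equiv.swap_apply_right]; exact hsym q p
      · have hcp : c ≠ p := (fin_ne_of_lt hy).symm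
        rw [swap_fix hcp hcq, hsym q c, hsym p c]
        exact (h c hcp hcq).symm
    by_cases hrq : r = q
    · rw [hrq] at hy ⊢
      have hcp : c ≠ p := (fin_ne_of_lt (by omega)).symm
      have hcq : c ≠ q := (fin_ne_of_lt hy).symm
      rw [Equiv.swap_apply_right, swap_fix hcp hcq, hsym p c, hsym q c]
      exact h c hcp hcq
    · rw [swap_fix hrp hrq]
      by_cases hcp : c = p
      · rw [hcp, Equiv.swap_apply_left]; exact (h r hrp hrq).symm
      by_cases hcq : c = q
      · rw [hcq, Equiv.swap_apply_right]; exact h r hrp hrq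
      · rw [swap_fix hcp hcq]

end ABlock

/-! ### Assembly -/

variable (M : DataMatrix K)

/-- The combined condition `W`. -/
abbrev W (p q : Fin K) : Prop :=
  M.1 q < M.1 p ∨ (M.1 p = M.1 q ∧
    (M.2.1 q < M.2.1 p ∨ (M.2.1 p = M.2.1 q ∧
      (M.2.2.1 q < M.2.2.1 p ∨ (M.2.2.1 p = M.2.2.1 q ∧ T M.2.2.2 p q)))))

lemma vvec_eq (N : DataMatrix K) :
    vvec N = (List.finRange K).map N.1 ++ ((List.finRange K).map N.2.1 ++
      ((List.finRange K).map N.2.2.1 ++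
        (Pairs K).map (fun x => N.2.2.2 x.1 x.2))) := by
  simp only [vvec, List.ofFn_eq_map, block4_eq_map, List.append_assoc]

lemma prec_iff (hsym : ∀ i j, M.2.2.2 i j = M.2.2.2 j i)
    (p q : Fin K) (hpq : (p : ℕ) + 1 = (q : ℕ)) :
    prec (permAct (Equiv.swap p q) M) M ↔ W M p q := by
  have hplt : (p : ℕ) < (q : ℕ) := by omega
  show List.Lex (· < ·) (vvec _) (vvec _) ↔ _
  rw [vvec_eq, vvec_eq]
  simp only [permAct]
  rw [lex_append_iff _ _ (by simp), lex_append_iff _ _ (by simp),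
    lex_append_iff _ _ (by simp)]
  rw [vec_block_lex M.1 p q hplt, vec_block_eq M.1 p q hplt,
    vec_block_lex M.2.1 p q hplt, vec_block_eq M.2.1 p q hplt,
    vec_block_lex M.2.2.1 p q hplt, vec_block_eq M.2.2.1 p q hplt,
    ablock_lex hsym hpq]

/-- Extract a minimal witness. -/
lemma min_witness {a : Fin K → Fin K → ℕ} {p q i : Fin K}
    (hip : i ≠ p) (hiq : i ≠ q) (h : a i q < a i p)
    (hmin : ∀ i' : Fin K, (i' : ℕ) < (i : ℕ) → i' ≠ p → i' ≠ q → a i' q ≤ a i' p) :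
    T a p q := by
  classical
  obtain ⟨i₀, hi₀mem, hi₀min⟩ := Finset.exists_min_image
    (Finset.univ.filter (fun i' : Fin K =>
      i' ≠ p ∧ i' ≠ q ∧ a i' q < a i' p ∧ (i' : ℕ) ≤ (i : ℕ)))
    (fun i' => (i' : ℕ)) ⟨i, by simp [hip, hiq, h]⟩
  simp only [Finset.mem_filter, Finset.mem_univ, true_and] at hi₀mem hi₀min
  obtain ⟨h1, h2, h3, h4⟩ := hi₀mem
  refine ⟨i₀, h1, h2, h3, ?_⟩
  intro i' hlt hip' hiq'
  have hle : a i' q ≤ a i' p := hmin i' (by omega) hip' hiq'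
  by_contra hne
  have hstrict : a i' q < a i' p := lt_of_le_of_ne hle (fun e => hne e.symm)
  have := hi₀min i' ⟨hip', hiq', hstrict, by omega⟩
  omega

lemma break_iff (p q : Fin K) :
    ¬ ((M.1 p ≤ M.1 q) ∧
      (M.2.1 q < M.2.1 p → M.1 p < M.1 q) ∧
      (M.2.2.1 q < M.2.2.1 p → M.1 p < M.1 q ∨ M.2.1 p < M.2.1 q) ∧
      (∀ i : Fin K, i ≠ p → i ≠ q → M.2.2.2 i q < M.2.2.2 i p →
        M.1 p < M.1 q ∨ M.2.1 p < M.2.1 q ∨ M.2.2.1 p < M.2.2.1 q ∨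
        ∃ i' : Fin K, (i' : ℕ) < (i : ℕ) ∧ i' ≠ p ∧ i' ≠ q ∧
          M.2.2.2 i' p < M.2.2.2 i' q)) ↔ W M p q := by
  constructor
  · intro h
    rw [not_and_or, not_and_or, not_and_or] at h
    rcases h with h | h | h | h
    · exact Or.inl (by omega)
    · push_neg at h
      obtain ⟨hn, hg⟩ := h
      rcases Nat.lt_or_ge (M.1 q) (M.1 p) with h' | h'
      · exact Or.inl h'
      · exact Or.inr ⟨by omega, Or.inl hn⟩
    · push_neg at h
      obtain ⟨hl, hg, hn⟩ := h
      rcases Nat.lt_or_ge (M.1 q) (M.1 p) with h' | h'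
      · exact Or.inl h'
      rcases Nat.lt_or_ge (M.2.1 q) (M.2.1 p) with h'' | h''
      · exact Or.inr ⟨by omega, Or.inl h''⟩
      · exact Or.inr ⟨by omega, Or.inr ⟨by omega, Or.inl hl⟩⟩
    · push_neg at h
      obtain ⟨i, hip, hiq, ha, hg, hn, hl, hmin⟩ := h
      rcases Nat.lt_or_ge (M.1 q) (M.1 p) with h' | h'
      · exact Or.inl h'
      rcases Nat.lt_or_ge (M.2.1 q) (M.2.1 p) with h'' | h''
      · exact Or.inr ⟨by omega, Or.inl h''⟩
      rcases Nat.lt_or_ge (M.2.2.1 q) (M.2.2.1 p) with h''' | h'''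
      · exact Or.inr ⟨by omega, Or.inr ⟨by omega, Or.inl h'''⟩⟩
      · refine Or.inr ⟨by omega, Or.inr ⟨by omega, Or.inr ⟨by omega, ?_⟩⟩⟩
        exact min_witness hip hiq ha
          (fun i' hlt hip' hiq' => hmin i' hlt hip' hiq')
  · rintro (h | ⟨hg, h | ⟨hn, h | ⟨hl, i, hip, hiq, ha, hmin⟩⟩⟩) ⟨c1, c2, c3, c4⟩
    · omega
    · have := c2 h; omega
    · have := c3 h; omega
    · rcases c4 i hip hiq ha with h' | h' | h' | ⟨i', hlt, hip', hiq', h'⟩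
      · omega
      · omega
      · omega
      · have := hmin i' hlt hip' hiq'; omega

end Stmt11Aux

open Stmt11Aux in
/-- A data matrix with symmetric `a`-part has a breaking position (is not
ordered) if and only if some adjacent transposition makes it strictly
`≺`-smaller. -/
theorem stmt11 (K : ℕ) (hK : 1 ≤ K) (M : DataMatrix K)
    (hsym : ∀ i j, M.2.2.2 i j = M.2.2.2 j i) :
    ¬ OrderedData M ↔
      ∃ (j : ℕ) (hj : j < K), 0 < j ∧
        prec (permAct (Equiv.swap (⟨j - 1, by omega⟩ : Fin K) ⟨j, hj⟩) M) M := by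
  have key : ∀ (j : ℕ) (hj : j < K), 0 < j →
      (prec (permAct (Equiv.swap (⟨j - 1, by omega⟩ : Fin K) ⟨j, hj⟩) M) M ↔
        W M ⟨j - 1, by omega⟩ ⟨j, hj⟩) := by
    intro j hj h0
    exact prec_iff M hsym _ _ (by show j - 1 + 1 = j; omega)
  constructor
  · intro h
    rw [OrderedData] at h
    simp only [not_forall, Classical.not_imp] at h
    obtain ⟨j, hj, h0, p, q, hp, hq, hbrk⟩ := h
    subst hp; subst hq
    refine ⟨j, hj, h0, ?_⟩
    rw [key j hj h0]
    exact (break_iff M _ _).1 hbrk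
  · rintro ⟨j, hj, h0, hprec⟩
    rw [key j hj h0] at hprec
    intro h
    have := h j hj h0 _ _ rfl rfl
    exact (break_iff M _ _).2 hprec this
end
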